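/- arXiv:1407.4495 — 7 statements merged into one kernel-verified Lean document; each statement's English description precedes it below -/
import Mathlib

section
/- Let G be a finite group, p a prime, and suppose G has three normal subgroups N₁, N₂, N₃ such that the product N₁N₂N₃ is not equal to N_iN_j for any pair i ≠ j. If every proper subgroup of N₁N₂N₃ has abelian Sylow p-subgroups, then the Sylow p-subgroups of N₁N₂N₃ are abelian. -/
open Subgroup

section Aux

variable {G : Type*} [Group G]

private lemma card_inf_mul [Finite G] (H N : Subgroup G) :
    H.relIndex N * Nat.card ↥(H ⊓ N) = Nat.card N := by
  have h2 : Nat.card ↥(H.subgroupOf N) = Nat.card ↥(H ⊓ N) := by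
    rw [← inf_subgroupOf_right H N]
    exact Nat.card_congr (subgroupOfEquivOfLe inf_le_right).toEquiv
  rw [Subgroup.relIndex, ← h2, Subgroup.index_mul_card]

private lemma relIndex_eq_index_of_sup_eq_top [Finite G] {H N : Subgroup G} [N.Normal]
    (h : H ⊔ N = ⊤) : H.relIndex N = H.index := by
  have hN : N.index = N.relIndex H := by
    rw [← relIndex_top_right (H := N), ← h, relIndex_sup_right]
  have e1 : H.index * Nat.card H = Nat.card G := Subgroup.index_mul_card H
  have e2 : N.index * Nat.card N = Nat.card G := Subgroup.index_mul_card N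
  have e3 : N.relIndex H * Nat.card ↥(N ⊓ H) = Nat.card H := card_inf_mul N H
  have e4 : H.relIndex N * Nat.card ↥(H ⊓ N) = Nat.card N := card_inf_mul H N
  have hc : Nat.card ↥(N ⊓ H) = Nat.card ↥(H ⊓ N) := by rw [inf_comm]
  set c := Nat.card ↥(H ⊓ N)
  have key : H.index * (N.relIndex H * c) = H.relIndex N * (N.relIndex H * c) := by
    rw [hc] at e3
    calc H.index * (N.relIndex H * c) = H.index * Nat.card H := by rw [e3]
      _ = N.index * Nat.card N := by rw [e1, e2]
      _ = N.relIndex H * (H.relIndex N * c) := by rw [← hN, e4]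
      _ = H.relIndex N * (N.relIndex H * c) := by ring
  have hpos : 0 < N.relIndex H * c := by
    have : N.relIndex H * c ≠ 0 := by
      rw [hc] at e3
      intro h0
      rw [h0] at e3
      exact Nat.card_pos.ne' e3.symm
    omega
  exact (Nat.eq_of_mul_eq_mul_right hpos key).symm

private lemma relIndex_eq_relIndex_sup [Finite G] {H N : Subgroup G} (hHN : H ≤ normalizer (N : Set G)) :
    H.relIndex N = H.relIndex (H ⊔ N) := by
  have hHT : H ≤ H ⊔ N := le_sup_left
  have hNT : N ≤ H ⊔ N := le_sup_right
  have hT : H ⊔ N ≤ normalizer (N : Set G) := sup_le hHN le_normalizer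
  haveI hnorm : (N.subgroupOf (H ⊔ N)).Normal := by
    rw [normal_subgroupOf_iff hNT]
    intro h k hh hk
    exact ((mem_normalizer_iff.mp (hT hk)) h).mp hh
  have hsup : H.subgroupOf (H ⊔ N) ⊔ N.subgroupOf (H ⊔ N) = ⊤ :=
    (subgroupOf_sup hHT hNT).symm.trans (subgroupOf_self _)
  have := relIndex_eq_index_of_sup_eq_top hsup
  rwa [relIndex_subgroupOf hNT] at this

private lemma card_sup_mul_card_inf [Finite G] {H N : Subgroup G} (hHN : H ≤ normalizer (N : Set G)) :
    Nat.card ↥(H ⊔ N) * Nat.card ↥(H ⊓ N) = Nat.card H * Nat.card N := by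
  have e1 : H.relIndex (H ⊔ N) * Nat.card H = Nat.card ↥(H ⊔ N) := by
    have := card_inf_mul H (H ⊔ N)
    rwa [inf_of_le_left (le_sup_left : H ≤ H ⊔ N)] at this
  have e4 := card_inf_mul H N
  rw [← e1, ← relIndex_eq_relIndex_sup hHN]
  calc H.relIndex N * Nat.card H * Nat.card ↥(H ⊓ N)
      = Nat.card H * (H.relIndex N * Nat.card ↥(H ⊓ N)) := by ring
    _ = Nat.card H * Nat.card N := by rw [e4]

private lemma card_inf_eq_ord_proj {p : ℕ} [Fact p.Prime] [Finite G] {N J : Subgroup G}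
    [N.Normal] (hNJ : N ≤ J) {Q : Subgroup G} (hQJ : Q ≤ J) (hpQ : IsPGroup p Q)
    (hcard : Nat.card Q = p ^ (Nat.card J).factorization p) :
    Nat.card ↥(Q ⊓ N) = p ^ (Nat.card N).factorization p := by
  have hp : p.Prime := Fact.out
  have hJ0 : Nat.card J ≠ 0 := Nat.card_pos.ne'
  have hN0 : Nat.card N ≠ 0 := Nat.card_pos.ne'
  -- the relIndex of Q in J is the p'-part of |J|
  have hrJ : Q.relIndex J * Nat.card Q = Nat.card J := by
    have := card_inf_mul Q J
    rwa [inf_of_le_left hQJ] at this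
  have hr_not_dvd : ¬ p ∣ Q.relIndex J := by
    have h2 : Q.relIndex J = Nat.card J / p ^ (Nat.card J).factorization p := by
      rw [← hcard]
      exact (Nat.div_eq_of_eq_mul_left Nat.card_pos hrJ.symm).symm
    rw [h2]
    exact Nat.not_dvd_ordCompl hp hJ0
  have hQnorm : Q ≤ normalizer (N : Set G) := le_top.trans_eq (normalizer_eq_top_iff.mpr ‹N.Normal›).symm
  have hdvd : Q.relIndex N ∣ Q.relIndex J := by
    rw [relIndex_eq_relIndex_sup hQnorm]
    exact ⟨(Q ⊔ N).relIndex J, (relIndex_mul_relIndex Q (Q ⊔ N) J le_sup_left (sup_le hQJ hNJ)).symm⟩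
  have hrN_not_dvd : ¬ p ∣ Q.relIndex N := fun h => hr_not_dvd (h.trans hdvd)
  have e : Q.relIndex N * Nat.card ↥(Q ⊓ N) = Nat.card N := card_inf_mul Q N
  obtain ⟨k, hk⟩ := (IsPGroup.to_inf_left hpQ (K := N)).exists_card_eq
  have hr0 : Q.relIndex N ≠ 0 := by
    intro h0; rw [h0, zero_mul] at e; exact hN0 e.symm
  have hv : (Nat.card N).factorization p = k := by
    rw [← e, hk, Nat.factorization_mul hr0 (pow_ne_zero _ hp.pos.ne'),
      Finsupp.add_apply, hp.factorization_pow, Finsupp.single_eq_same,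
      Nat.factorization_eq_zero_of_not_dvd hrN_not_dvd, zero_add]
  rw [hk, hv]

private lemma le_inf_sup_inf {p : ℕ} [Fact p.Prime] [Finite G] {N K : Subgroup G}
    [N.Normal] [K.Normal] {Q : Subgroup G} (hQ : Q ≤ N ⊔ K) (hpQ : IsPGroup p Q)
    (hcard : Nat.card Q = p ^ (Nat.card ↥(N ⊔ K)).factorization p) :
    Q ≤ (Q ⊓ N) ⊔ (Q ⊓ K) := by
  have hp : p.Prime := Fact.out
  have cX : Nat.card ↥(Q ⊓ N) = p ^ (Nat.card N).factorization p :=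
    card_inf_eq_ord_proj le_sup_left hQ hpQ hcard
  have cY : Nat.card ↥(Q ⊓ K) = p ^ (Nat.card K).factorization p :=
    card_inf_eq_ord_proj le_sup_right hQ hpQ hcard
  haveI : (N ⊓ K).Normal := inferInstance
  have cI : Nat.card ↥(Q ⊓ (N ⊓ K)) = p ^ (Nat.card ↥(N ⊓ K)).factorization p :=
    card_inf_eq_ord_proj (inf_le_left.trans le_sup_left) hQ hpQ hcard
  have hXY : (Q ⊓ N) ⊓ (Q ⊓ K) = Q ⊓ (N ⊓ K) := (inf_inf_distrib_left Q N K).symm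
  have hXnorm : Q ⊓ N ≤ normalizer ((Q ⊓ K : Subgroup G) : Set G) := by
    have key : ∀ x ∈ Q, ∀ n ∈ Q ⊓ K, x * n * x⁻¹ ∈ Q ⊓ K := fun x hx n hn =>
      ⟨Q.mul_mem (Q.mul_mem hx hn.1) (Q.inv_mem hx), Subgroup.Normal.conj_mem ‹K.Normal› n hn.2 x⟩
    intro x hx
    rw [mem_normalizer_iff]
    intro n
    constructor
    · exact key x hx.1 n
    · intro hn
      have hxQ : x ∈ Q := hx.1
      have := key x⁻¹ (Q.inv_mem hxQ) _ hn
      simpa [mul_assoc] using this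
  have prod : Nat.card ↥((Q ⊓ N) ⊔ (Q ⊓ K)) * Nat.card ↥(Q ⊓ (N ⊓ K))
      = Nat.card ↥(Q ⊓ N) * Nat.card ↥(Q ⊓ K) := by
    rw [← hXY]; exact card_sup_mul_card_inf hXnorm
  have hKnorm : N ≤ normalizer (K : Set G) := le_top.trans_eq (normalizer_eq_top_iff.mpr ‹K.Normal›).symm
  have big : Nat.card ↥(N ⊔ K) * Nat.card ↥(N ⊓ K) = Nat.card N * Nat.card K :=
    card_sup_mul_card_inf hKnorm
  have hJ0 : Nat.card ↥(N ⊔ K) ≠ 0 := Nat.card_pos.ne'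
  have hI0 : Nat.card ↥(N ⊓ K) ≠ 0 := Nat.card_pos.ne'
  have hN0 : Nat.card N ≠ 0 := Nat.card_pos.ne'
  have hK0 : Nat.card K ≠ 0 := Nat.card_pos.ne'
  have hv : (Nat.card ↥(N ⊔ K)).factorization p + (Nat.card ↥(N ⊓ K)).factorization p
      = (Nat.card N).factorization p + (Nat.card K).factorization p := by
    have h : (Nat.card ↥(N ⊔ K) * Nat.card ↥(N ⊓ K)).factorization p
        = (Nat.card N * Nat.card K).factorization p := by rw [big]
    rwa [Nat.factorization_mul hJ0 hI0, Nat.factorization_mul hN0 hK0,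
      Finsupp.add_apply, Finsupp.add_apply] at h
  have cR : Nat.card ↥((Q ⊓ N) ⊔ (Q ⊓ K)) = Nat.card Q := by
    have h1 : Nat.card ↥((Q ⊓ N) ⊔ (Q ⊓ K)) * p ^ (Nat.card ↥(N ⊓ K)).factorization p
        = Nat.card Q * p ^ (Nat.card ↥(N ⊓ K)).factorization p := by
      rw [← cI, prod, cX, cY, ← pow_add, ← hv, pow_add, hcard, cI]
    exact Nat.eq_of_mul_eq_mul_right (pow_pos hp.pos _) h1
  have : (Q ⊓ N) ⊔ (Q ⊓ K) = Q :=
    Subgroup.eq_of_le_of_card_ge (sup_le inf_le_left inf_le_left) cR.ge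
  exact this.ge

private lemma commute_of_mem_closure {s : Set G} (hs : ∀ a ∈ s, ∀ b ∈ s, Commute a b)
    {x y : G} (hx : x ∈ closure s) (hy : y ∈ closure s) : Commute x y := by
  induction hx using closure_induction with
  | mem a ha =>
    induction hy using closure_induction with
    | mem b hb => exact hs a ha b hb
    | one => exact Commute.one_right a
    | mul b c _ _ hb hc => exact hb.mul_right hc
    | inv b _ hb => exact hb.inv_right
  | one => exact Commute.one_left y
  | mul a b _ _ ha hb => exact ha.mul_left hb
  | inv a _ ha => exact ha.inv_left

end Aux

private theorem main_aux {H : Type*} [Group H] [Finite H] (p : ℕ) [Fact p.Prime]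
    (M₁ M₂ M₃ : Subgroup H) [M₁.Normal] [M₂.Normal] [M₃.Normal]
    (htop : M₁ ⊔ (M₂ ⊔ M₃) = ⊤)
    (hprop12 : M₁ ⊔ M₂ ≠ ⊤) (hprop13 : M₁ ⊔ M₃ ≠ ⊤) (hprop23 : M₂ ⊔ M₃ ≠ ⊤)
    (hab : ∀ K : Subgroup H, K ≠ ⊤ → ∀ S : Sylow p ↥K, IsMulCommutative ↥(S : Subgroup ↥K))
    (P : Sylow p H) : IsMulCommutative ↥(P : Subgroup H) := by
  have comm_pair : ∀ K : Subgroup H, K ≠ ⊤ →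
      ∀ a ∈ (P : Subgroup H) ⊓ K, ∀ b ∈ (P : Subgroup H) ⊓ K, a * b = b * a := by
    intro K hK a ha b hb
    have hpg : IsPGroup p (((P : Subgroup H) ⊓ K).subgroupOf K) :=
      (IsPGroup.to_inf_left P.isPGroup' (K := K)).of_equiv
        (subgroupOfEquivOfLe inf_le_right).symm
    obtain ⟨S, hS⟩ := hpg.exists_le_sylow
    haveI := hab K hK S
    have hmem : ∀ c : H, ∀ hc : c ∈ (P : Subgroup H) ⊓ K, (⟨c, hc.2⟩ : ↥K) ∈ (S : Subgroup ↥K) :=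
      fun c hc => hS (mem_subgroupOf.mpr hc)
    have := Subgroup.mul_comm_of_mem_isMulCommutative (S : Subgroup ↥K)
      (hmem a ha) (hmem b hb)
    exact congrArg Subtype.val this
  have hQle : (P : Subgroup H) ≤ M₁ ⊔ (M₂ ⊔ M₃) := le_top.trans htop.symm.le
  have hcardQ : Nat.card (P : Subgroup H) = p ^ (Nat.card ↥(M₁ ⊔ (M₂ ⊔ M₃))).factorization p := by
    rw [htop, card_top]
    exact P.card_eq_multiplicity
  have hd1 : (P : Subgroup H) ≤ ((P : Subgroup H) ⊓ M₁) ⊔ ((P : Subgroup H) ⊓ (M₂ ⊔ M₃)) :=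
    le_inf_sup_inf hQle P.isPGroup' hcardQ
  have hcard23 : Nat.card ↥((P : Subgroup H) ⊓ (M₂ ⊔ M₃))
      = p ^ (Nat.card ↥(M₂ ⊔ M₃)).factorization p :=
    card_inf_eq_ord_proj le_sup_right hQle P.isPGroup' hcardQ
  have hd2 : (P : Subgroup H) ⊓ (M₂ ⊔ M₃) ≤
      (((P : Subgroup H) ⊓ (M₂ ⊔ M₃)) ⊓ M₂) ⊔ (((P : Subgroup H) ⊓ (M₂ ⊔ M₃)) ⊓ M₃) :=
    le_inf_sup_inf inf_le_right (IsPGroup.to_inf_left P.isPGroup' (K := M₂ ⊔ M₃)) hcard23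
  have hdle : (P : Subgroup H) ≤ ((P : Subgroup H) ⊓ M₁) ⊔
      (((P : Subgroup H) ⊓ M₂) ⊔ ((P : Subgroup H) ⊓ M₃)) := by
    refine hd1.trans (sup_le le_sup_left (hd2.trans ?_))
    exact (sup_le_sup (inf_le_inf_right M₂ inf_le_left)
      (inf_le_inf_right M₃ inf_le_left)).trans le_sup_right
  set s : Set H := ↑((P : Subgroup H) ⊓ M₁) ∪
    (↑((P : Subgroup H) ⊓ M₂) ∪ ↑((P : Subgroup H) ⊓ M₃)) with hs
  have hclos : ((P : Subgroup H) ⊓ M₁) ⊔ (((P : Subgroup H) ⊓ M₂) ⊔ ((P : Subgroup H) ⊓ M₃))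
      = closure s := by
    rw [hs, Subgroup.closure_union, Subgroup.closure_union, Subgroup.closure_eq,
      Subgroup.closure_eq, Subgroup.closure_eq]
  have caseP : ∀ (Mi Mj : Subgroup H), Mi ⊔ Mj ≠ ⊤ →
      ∀ u ∈ (P : Subgroup H) ⊓ (Mi ⊔ Mj), ∀ v ∈ (P : Subgroup H) ⊓ (Mi ⊔ Mj), Commute u v :=
    fun Mi Mj hne u hu v hv => comm_pair (Mi ⊔ Mj) hne u hu v hv
  have conv1 : ∀ (Mj : Subgroup H) {u : H}, u ∈ (P : Subgroup H) ⊓ M₁ →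
      u ∈ (P : Subgroup H) ⊓ (M₁ ⊔ Mj) := fun Mj u hu => ⟨hu.1, mem_sup_left hu.2⟩
  have conv2l : ∀ (Mj : Subgroup H) {u : H}, u ∈ (P : Subgroup H) ⊓ M₂ →
      u ∈ (P : Subgroup H) ⊓ (M₂ ⊔ Mj) := fun Mj u hu => ⟨hu.1, mem_sup_left hu.2⟩
  have conv2r : ∀ (Mi : Subgroup H) {u : H}, u ∈ (P : Subgroup H) ⊓ M₂ →
      u ∈ (P : Subgroup H) ⊓ (Mi ⊔ M₂) := fun Mi u hu => ⟨hu.1, mem_sup_right hu.2⟩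
  have conv3 : ∀ (Mi : Subgroup H) {u : H}, u ∈ (P : Subgroup H) ⊓ M₃ →
      u ∈ (P : Subgroup H) ⊓ (Mi ⊔ M₃) := fun Mi u hu => ⟨hu.1, mem_sup_right hu.2⟩
  have hcomm : ∀ u ∈ s, ∀ v ∈ s, Commute u v := by
    rintro u (hu | hu | hu) v (hv | hv | hv)
    · exact caseP M₁ M₂ hprop12 u (conv1 M₂ hu) v (conv1 M₂ hv)
    · exact caseP M₁ M₂ hprop12 u (conv1 M₂ hu) v (conv2r M₁ hv)
    · exact caseP M₁ M₃ hprop13 u (conv1 M₃ hu) v (conv3 M₁ hv)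
    · exact caseP M₁ M₂ hprop12 u (conv2r M₁ hu) v (conv1 M₂ hv)
    · exact caseP M₂ M₃ hprop23 u (conv2l M₃ hu) v (conv2l M₃ hv)
    · exact caseP M₂ M₃ hprop23 u (conv2l M₃ hu) v (conv3 M₂ hv)
    · exact caseP M₁ M₃ hprop13 u (conv3 M₁ hu) v (conv1 M₃ hv)
    · exact caseP M₂ M₃ hprop23 u (conv3 M₂ hu) v (conv2l M₃ hv)
    · exact caseP M₂ M₃ hprop23 u (conv3 M₂ hu) v (conv3 M₂ hv)
  constructor
  constructor
  intro a b
  apply Subtype.ext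
  exact commute_of_mem_closure hcomm (hclos ▸ hdle a.2) (hclos ▸ hdle b.2)

/-- If `N₁, N₂, N₃ ⊴ G` with `N₁N₂N₃ ≠ NᵢNⱼ` for all pairs `i ≠ j`, and every proper
subgroup of `N₁N₂N₃` has abelian Sylow `p`-subgroups, then the Sylow `p`-subgroups of
`N₁N₂N₃` are abelian. -/
theorem sylow_abelian_of_three_normals {G : Type*} [Group G] [Finite G] (p : ℕ)
    [Fact p.Prime] (N₁ N₂ N₃ : Subgroup G)
    (h1 : N₁.Normal) (h2 : N₂.Normal) (h3 : N₃.Normal)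
    (h12 : N₁ ⊔ N₂ ⊔ N₃ ≠ N₁ ⊔ N₂) (h13 : N₁ ⊔ N₂ ⊔ N₃ ≠ N₁ ⊔ N₃)
    (h23 : N₁ ⊔ N₂ ⊔ N₃ ≠ N₂ ⊔ N₃)
    (hab : ∀ K : Subgroup ↥(N₁ ⊔ N₂ ⊔ N₃), K ≠ ⊤ →
      ∀ P : Sylow p ↥K, IsMulCommutative ↥(P : Subgroup ↥K)) :
    ∀ P : Sylow p ↥(N₁ ⊔ N₂ ⊔ N₃), IsMulCommutative ↥(P : Subgroup ↥(N₁ ⊔ N₂ ⊔ N₃)) := by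
  intro P
  have hN1T : N₁ ≤ N₁ ⊔ N₂ ⊔ N₃ := le_sup_left.trans le_sup_left
  have hN2T : N₂ ≤ N₁ ⊔ N₂ ⊔ N₃ := le_sup_right.trans le_sup_left
  have hN3T : N₃ ≤ N₁ ⊔ N₂ ⊔ N₃ := le_sup_right
  haveI := h1.subgroupOf (N₁ ⊔ N₂ ⊔ N₃)
  haveI := h2.subgroupOf (N₁ ⊔ N₂ ⊔ N₃)
  haveI := h3.subgroupOf (N₁ ⊔ N₂ ⊔ N₃)
  have hprop : ∀ N' : Subgroup G, N' ≤ N₁ ⊔ N₂ ⊔ N₃ → N₁ ⊔ N₂ ⊔ N₃ ≠ N' →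
      N'.subgroupOf (N₁ ⊔ N₂ ⊔ N₃) ≠ ⊤ := by
    intro N' hle hne h
    exact hne (le_antisymm (Subgroup.subgroupOf_eq_top.mp h) hle)
  refine main_aux p (N₁.subgroupOf _) (N₂.subgroupOf _) (N₃.subgroupOf _) ?_ ?_ ?_ ?_ hab P
  · rw [← subgroupOf_sup hN2T hN3T, ← subgroupOf_sup hN1T (sup_le hN2T hN3T), ← sup_assoc]
    exact subgroupOf_self _
  · rw [← subgroupOf_sup hN1T hN2T]
    exact hprop _ (sup_le hN1T hN2T) h12
  · rw [← subgroupOf_sup hN1T hN3T]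
    exact hprop _ (sup_le hN1T hN3T) h13
  · rw [← subgroupOf_sup hN2T hN3T]
    exact hprop _ (sup_le hN2T hN3T) h23
end

section
/- Let G be a finite group with normal subgroups N and K such that G = NK, and let P be a Sylow p-subgroup of G. Then P = (P ∩ N)(P ∩ K). -/
open scoped Pointwise

/-- If `H ≤ L`, then `[L : H] * |H| = |L|`. -/
private theorem aux_relIndex_mul_card {G : Type*} [Group G] [Finite G] {H L : Subgroup G}
    (hHL : H ≤ L) : H.relIndex L * Nat.card H = Nat.card L := by
  have h1 := Subgroup.index_mul_card (H.subgroupOf L)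
  rwa [Nat.card_congr (Subgroup.subgroupOfEquivOfLe hHL).toEquiv] at h1

/-- If `K` is normal, `|H ⊔ K| * |H ⊓ K| = |H| * |K|`. -/
private theorem aux_card_sup_mul_card_inf {G : Type*} [Group G] [Finite G] (H K : Subgroup G)
    [K.Normal] : Nat.card (H ⊔ K : Subgroup G) * Nat.card (H ⊓ K : Subgroup G) =
      Nat.card H * Nat.card K := by
  have h1 : (H ⊓ K).relIndex H * Nat.card (H ⊓ K : Subgroup G) = Nat.card H :=
    aux_relIndex_mul_card inf_le_left
  have h2 : K.relIndex (H ⊔ K) * Nat.card K = Nat.card (H ⊔ K : Subgroup G) :=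
    aux_relIndex_mul_card le_sup_right
  rw [Subgroup.relIndex_sup_right] at h2
  have h3 : (H ⊓ K).relIndex H = K.relIndex H := by
    rw [inf_comm, Subgroup.inf_relIndex_right]
  calc Nat.card (H ⊔ K : Subgroup G) * Nat.card (H ⊓ K : Subgroup G)
      = (H ⊓ K).relIndex H * Nat.card (H ⊓ K : Subgroup G) * Nat.card K := by
        rw [h3, ← h2]; ring
    _ = Nat.card H * Nat.card K := by rw [h1]

/-- If `M` is normal and `P` is a Sylow `p`-subgroup, then `p ∤ [M : P ⊓ M]`. -/
private theorem aux_not_dvd_relIndex {G : Type*} [Group G] [Finite G] {p : ℕ} [Fact p.Prime]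
    (P : Sylow p G) (M : Subgroup G) [M.Normal] :
    ¬ p ∣ (P : Subgroup G).relIndex M := by
  set Q : Subgroup G := (P : Subgroup G)
  have h1 : Nat.card (Q ⊔ M : Subgroup G) * Nat.card (Q ⊓ M : Subgroup G) =
      Nat.card Q * Nat.card M := aux_card_sup_mul_card_inf Q M
  have h2 : Q.relIndex (Q ⊔ M) * Nat.card Q = Nat.card (Q ⊔ M : Subgroup G) :=
    aux_relIndex_mul_card le_sup_left
  have h3 : (Q ⊓ M).relIndex M * Nat.card (Q ⊓ M : Subgroup G) = Nat.card M :=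
    aux_relIndex_mul_card inf_le_right
  have key : Q.relIndex (Q ⊔ M) = Q.relIndex M := by
    rw [← Subgroup.inf_relIndex_right Q M]
    have hc1 : 0 < Nat.card Q := Nat.card_pos
    have hc2 : 0 < Nat.card (Q ⊓ M : Subgroup G) := Nat.card_pos
    have : Q.relIndex (Q ⊔ M) * Nat.card Q * Nat.card (Q ⊓ M : Subgroup G) =
        (Q ⊓ M).relIndex M * Nat.card Q * Nat.card (Q ⊓ M : Subgroup G) := by
      rw [h2, h1, ← h3]; ring
    exact Nat.eq_of_mul_eq_mul_right hc2 (Nat.eq_of_mul_eq_mul_right hc1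
      (by simpa [mul_right_comm] using this))
  rw [← key]
  intro hdvd
  exact P.not_dvd_index (hdvd.trans (Subgroup.relIndex_dvd_index_of_le le_sup_left))

/-- If `N, K ⊴ G` with `G = NK` and `P` is a Sylow `p`-subgroup of `G`, then
`P = (P ∩ N)(P ∩ K)`. -/
theorem sylow_eq_inf_mul_inf {G : Type*} [Group G] [Finite G] (p : ℕ) [Fact p.Prime]
    (N K : Subgroup G) [N.Normal] [K.Normal]
    (h : (N : Set G) * (K : Set G) = Set.univ) (P : Sylow p G) :
    ((P : Subgroup G) : Set G) =
      (((P : Subgroup G) ⊓ N : Subgroup G) : Set G) *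
        (((P : Subgroup G) ⊓ K : Subgroup G) : Set G) := by
  set Q : Subgroup G := (P : Subgroup G) with hQdef
  -- work inside P
  set A : Subgroup Q := N.subgroupOf Q with hA
  set B : Subgroup Q := K.subgroupOf Q with hB
  have hAB : A ⊓ B = (N ⊓ K).subgroupOf Q := by
    rw [hA, hB, Subgroup.subgroupOf, Subgroup.subgroupOf, Subgroup.subgroupOf,
      Subgroup.comap_inf]
  -- cardinalities
  have cardA : Nat.card A = Nat.card (Q ⊓ N : Subgroup G) := by
    rw [hA, ← Subgroup.inf_subgroupOf_left N Q]
    exact Nat.card_congr (Subgroup.subgroupOfEquivOfLe inf_le_left).toEquiv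
  have cardB : Nat.card B = Nat.card (Q ⊓ K : Subgroup G) := by
    rw [hB, ← Subgroup.inf_subgroupOf_left K Q]
    exact Nat.card_congr (Subgroup.subgroupOfEquivOfLe inf_le_left).toEquiv
  have cardAB : Nat.card (A ⊓ B : Subgroup Q) = Nat.card (Q ⊓ (N ⊓ K) : Subgroup G) := by
    rw [hAB, ← Subgroup.inf_subgroupOf_left (N ⊓ K) Q]
    exact Nat.card_congr (Subgroup.subgroupOfEquivOfLe inf_le_left).toEquiv
  -- counting identities
  have hsup : Nat.card (A ⊔ B : Subgroup Q) * Nat.card (A ⊓ B : Subgroup Q) =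
      Nat.card A * Nat.card B := aux_card_sup_mul_card_inf A B
  have hN' : Q.relIndex N * Nat.card (Q ⊓ N : Subgroup G) = Nat.card N := by
    rw [← Subgroup.inf_relIndex_right Q N]; exact aux_relIndex_mul_card inf_le_right
  have hK' : Q.relIndex K * Nat.card (Q ⊓ K : Subgroup G) = Nat.card K := by
    rw [← Subgroup.inf_relIndex_right Q K]; exact aux_relIndex_mul_card inf_le_right
  have hJ' : Q.relIndex (N ⊓ K) * Nat.card (Q ⊓ (N ⊓ K) : Subgroup G) = Nat.card (N ⊓ K : Subgroup G) := by
    rw [← Subgroup.inf_relIndex_right Q (N ⊓ K)]; exact aux_relIndex_mul_card inf_le_right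
  have hNKtop : N ⊔ K = ⊤ := by
    apply SetLike.coe_injective
    rw [Subgroup.mul_normal N K, h, Subgroup.coe_top]
  have hG : Nat.card N * Nat.card K = Nat.card G * Nat.card (N ⊓ K : Subgroup G) := by
    have := aux_card_sup_mul_card_inf N K
    rw [hNKtop, Subgroup.card_top] at this
    exact this.symm
  have hGQ : Q.index * Nat.card Q = Nat.card G := Subgroup.index_mul_card Q
  -- main equation
  set q := Nat.card (A ⊔ B : Subgroup Q)
  set c := Nat.card (Q ⊓ (N ⊓ K) : Subgroup G)
  have main : Q.relIndex N * Q.relIndex K * q * c =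
      Q.index * Q.relIndex (N ⊓ K) * Nat.card Q * c := by
    have key : (Q.relIndex N * Q.relIndex K) * (q * c) *
          (Nat.card (Q ⊓ N : Subgroup G) * Nat.card (Q ⊓ K : Subgroup G)) =
        (Q.index * Q.relIndex (N ⊓ K) * Nat.card Q) * c *
          (Nat.card (Q ⊓ N : Subgroup G) * Nat.card (Q ⊓ K : Subgroup G)) := by
      have lhs : (Q.relIndex N * Nat.card (Q ⊓ N : Subgroup G)) *
            (Q.relIndex K * Nat.card (Q ⊓ K : Subgroup G)) * (q * c) =
          Nat.card N * Nat.card K * (q * c) := by rw [hN', hK']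
      have qc : q * c = Nat.card A * Nat.card B := by rw [← cardAB] at *; exact hsup
      have rhs : Nat.card N * Nat.card K * (q * c) =
          (Q.index * Nat.card Q) * (Q.relIndex (N ⊓ K) * c) * (q * c) := by
        rw [hGQ, hJ', hG]
      calc (Q.relIndex N * Q.relIndex K) * (q * c) *
            (Nat.card (Q ⊓ N : Subgroup G) * Nat.card (Q ⊓ K : Subgroup G))
          = (Q.relIndex N * Nat.card (Q ⊓ N : Subgroup G)) *
              (Q.relIndex K * Nat.card (Q ⊓ K : Subgroup G)) * (q * c) := by ring
        _ = (Q.index * Nat.card Q) * (Q.relIndex (N ⊓ K) * c) * (q * c) := by rw [lhs, rhs]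
        _ = (Q.index * Q.relIndex (N ⊓ K) * Nat.card Q) * c * (q * c) := by ring
        _ = (Q.index * Q.relIndex (N ⊓ K) * Nat.card Q) * c *
              (Nat.card A * Nat.card B) := by rw [qc]
        _ = (Q.index * Q.relIndex (N ⊓ K) * Nat.card Q) * c *
              (Nat.card (Q ⊓ N : Subgroup G) * Nat.card (Q ⊓ K : Subgroup G)) := by
            rw [cardA, cardB]
    have hpos : 0 < Nat.card (Q ⊓ N : Subgroup G) * Nat.card (Q ⊓ K : Subgroup G) :=
      Nat.mul_pos Nat.card_pos Nat.card_pos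
    have := Nat.eq_of_mul_eq_mul_right hpos key
    calc Q.relIndex N * Q.relIndex K * q * c
        = (Q.relIndex N * Q.relIndex K) * (q * c) := by ring
      _ = Q.index * Q.relIndex (N ⊓ K) * Nat.card Q * c := this
  -- cancel c
  have main2 : Q.relIndex N * Q.relIndex K * q = Q.index * Q.relIndex (N ⊓ K) * Nat.card Q :=
    Nat.eq_of_mul_eq_mul_right (Nat.card_pos) main
  -- p-adic conclusion : Nat.card Q ∣ q
  obtain ⟨n, hn⟩ := IsPGroup.iff_card.mp P.2
  have hcop : (Nat.card Q).Coprime (Q.relIndex N * Q.relIndex K) := by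
    rw [hn]
    exact Nat.Coprime.pow_left n (Nat.Coprime.mul_right
      ((Nat.Prime.coprime_iff_not_dvd Fact.out).mpr (aux_not_dvd_relIndex P N))
      ((Nat.Prime.coprime_iff_not_dvd Fact.out).mpr (aux_not_dvd_relIndex P K)))
  have hdvd : Nat.card Q ∣ q := by
    refine hcop.dvd_of_dvd_mul_left ?_
    exact ⟨Q.index * Q.relIndex (N ⊓ K), by rw [main2]; ring⟩
  have hqdvd : q ∣ Nat.card Q := Subgroup.card_subgroup_dvd_card (A ⊔ B)
  have hqeq : q = Nat.card Q := Nat.dvd_antisymm hqdvd hdvd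
  have htop : A ⊔ B = ⊤ := Subgroup.eq_top_of_card_eq _ hqeq
  -- conclude set equality
  ext x
  constructor
  · intro hx
    have hxt : (⟨x, hx⟩ : Q) ∈ A ⊔ B := htop ▸ Subgroup.mem_top _
    rw [← SetLike.mem_coe, Subgroup.mul_normal A B] at hxt
    obtain ⟨a, ha, b, hb, hab⟩ := hxt
    refine ⟨(a : G), ⟨a.2, ha⟩, (b : G), ⟨b.2, hb⟩, ?_⟩
    have := congrArg (Subtype.val) hab
    simpa using this
  · rintro ⟨a, ha, b, hb, rfl⟩
    exact mul_mem ha.1 hb.1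
end

section
/- Let G be a finite group, p a prime, and N a normal subgroup of G. If the conjugacy class size of every p-element of G is coprime to p, then the same holds for every p-element of N and for every p-element of G/N. -/
/-- If `N` is normal, then `|N : C ∩ N|` divides `|G : C|`. -/
lemma aux_relindex_dvd_index {G : Type*} [Group G] [Finite G] (C N : Subgroup G) [N.Normal] :
    C.relIndex N ∣ C.index := by
  have key : N.relIndex C = N.relIndex (C ⊔ N) :=
    Nat.card_congr (QuotientGroup.quotientInfEquivProdNormalQuotient C N).toEquiv
  have h1 : N.relIndex C * C.relIndex (C ⊔ N) = (C ⊓ N).relIndex (C ⊔ N) := by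
    rw [← Subgroup.inf_relIndex_left]
    exact Subgroup.relIndex_mul_relIndex _ _ _ inf_le_left le_sup_left
  have h2 : C.relIndex N * N.relIndex (C ⊔ N) = (C ⊓ N).relIndex (C ⊔ N) := by
    rw [← Subgroup.inf_relIndex_right]
    exact Subgroup.relIndex_mul_relIndex _ _ _ inf_le_right le_sup_right
  have hne : N.relIndex C ≠ 0 := Subgroup.index_ne_zero_of_finite
  have hmul : N.relIndex C * C.relIndex (C ⊔ N) = N.relIndex C * C.relIndex N := by
    rw [h1, ← h2, key]; ring
  have heq : C.relIndex (C ⊔ N) = C.relIndex N :=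
    Nat.eq_of_mul_eq_mul_left (Nat.pos_of_ne_zero hne) hmul
  rw [← heq]
  exact Subgroup.relIndex_dvd_index_of_le le_sup_left

/-- If every `p`-element of `G` has class size coprime to `p`, then the same holds in any
normal subgroup `N` and in the quotient `G/N`. -/
theorem pElement_class_size_normal_and_quotient {G : Type*} [Group G] [Finite G] (p : ℕ)
    [Fact p.Prime] (N : Subgroup G) [N.Normal]
    (h : ∀ x : G, (∃ n : ℕ, orderOf x = p ^ n) → ¬ p ∣ (Subgroup.centralizer {x}).index) :
    (∀ x : ↥N, (∃ n : ℕ, orderOf x = p ^ n) →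
      ¬ p ∣ (Subgroup.centralizer {x} : Subgroup ↥N).index) ∧
    (∀ x : G ⧸ N, (∃ n : ℕ, orderOf x = p ^ n) →
      ¬ p ∣ (Subgroup.centralizer {x} : Subgroup (G ⧸ N)).index) := by
  have hp := (Fact.out : p.Prime)
  constructor
  · intro x ⟨n, hx⟩
    have hG := h (x : G) ⟨n, by rw [Subgroup.orderOf_coe, hx]⟩
    have hcent : (Subgroup.centralizer {x} : Subgroup ↥N)
        = (Subgroup.centralizer {(x : G)}).subgroupOf N := by
      ext y
      simp [Subgroup.mem_subgroupOf, Subgroup.mem_centralizer_singleton_iff,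
        Subtype.ext_iff]
    rw [hcent]
    intro hdvd
    exact hG (hdvd.trans (aux_relindex_dvd_index _ N))
  · intro xb ⟨n, hxb⟩
    obtain ⟨g, rfl⟩ := QuotientGroup.mk'_surjective N xb
    set π := QuotientGroup.mk' N with hπ
    have hm : orderOf g ≠ 0 := (orderOf_pos g).ne'
    set m := orderOf g with hmdef
    set a := m.factorization p with hadef
    set b := ordCompl[p] m with hbdef
    have hmab : m = p ^ a * b := (Nat.ordProj_mul_ordCompl_eq_self m p).symm
    have hpb : ¬ p ∣ b := Nat.not_dvd_ordCompl hp hm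
    have hco : Nat.Coprime (p ^ a) b :=
      Nat.Coprime.pow_left _ ((Nat.Prime.coprime_iff_not_dvd hp).mpr hpb)
    obtain ⟨k, hk1, hk0⟩ := Nat.chineseRemainder hco 1 0
    have hbk : b ∣ k := (Nat.modEq_zero_iff_dvd).mp hk0
    have hx1 : (g ^ k) ^ (p ^ a) = 1 := by
      rw [← pow_mul]
      refine orderOf_dvd_iff_pow_eq_one.mp ?_
      rw [← hmdef, hmab, mul_comm k (p ^ a)]
      exact mul_dvd_mul_left (p ^ a) hbk
    obtain ⟨n', _, hordeq⟩ := (Nat.dvd_prime_pow hp).mp (orderOf_dvd_of_pow_eq_one hx1)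
    have hpna : p ^ n ∣ p ^ a := by
      have hd : p ^ n ∣ p ^ a * b := by
        rw [← hmab, hmdef, ← hxb]
        exact orderOf_map_dvd π g
      exact (Nat.Coprime.pow_left n ((Nat.Prime.coprime_iff_not_dvd hp).mpr hpb)).dvd_of_dvd_mul_right hd
    have h1 : π (g ^ k) = π g := by
      have hmod : k ≡ 1 [MOD orderOf (π g)] := by
        rw [hxb]
        exact hk1.of_dvd hpna
      rw [map_pow]
      calc π g ^ k = π g ^ 1 := pow_eq_pow_iff_modEq.mpr hmod
        _ = π g := pow_one _
    have hGx := h (g ^ k) ⟨n', hordeq⟩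
    have hle : (Subgroup.centralizer {g ^ k}).map π ≤ Subgroup.centralizer {π g} := by
      rintro _ ⟨y, hy, rfl⟩
      rw [SetLike.mem_coe, Subgroup.mem_centralizer_singleton_iff] at hy
      rw [Subgroup.mem_centralizer_singleton_iff]
      rw [← h1, ← map_mul, hy, map_mul]
    intro hdvd
    exact hGx (hdvd.trans ((Subgroup.index_dvd_of_le hle).trans
      ((Subgroup.centralizer {g ^ k}).index_map_dvd (QuotientGroup.mk'_surjective N))))
end

section
/- Let G be a finite group, p a prime, and N a normal subgroup with p not dividing the index |G : N|. If every p-element of N has conjugacy class size in N coprime to p, then every p-element of G has conjugacy class size in G coprime to p; moreover the Sylow p-subgroups of N are (non)abelian iff those of G are. -/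
open Subgroup

private lemma comm_of_le' {G : Type*} [Group G] {H K : Subgroup G} (hHK : H ≤ K)
    (hK : IsMulCommutative ↥K) : IsMulCommutative ↥H := by
  haveI := hK
  refine ⟨⟨fun a b => Subtype.ext ?_⟩⟩
  push_cast
  exact mul_comm_of_mem_isMulCommutative (H := K) (hHK a.2) (hHK b.2)

private lemma comm_of_subgroupOf {G : Type*} [Group G] {H N : Subgroup G} (hle : H ≤ N)
    (hc : IsMulCommutative ↥(H.subgroupOf N)) : IsMulCommutative ↥H := by
  constructor; constructor
  intro a b
  have := hc.is_comm.comm ⟨⟨a.1, hle a.2⟩, a.2⟩ ⟨⟨b.1, hle b.2⟩, b.2⟩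
  exact Subtype.ext (congrArg (fun z : ↥(H.subgroupOf N) => ((z : ↥N) : G)) this)

private lemma comm_of_map {G : Type*} [Group G] {N : Subgroup G} {P : Subgroup ↥N}
    (hc : IsMulCommutative ↥(P.map N.subtype)) : IsMulCommutative ↥P := by
  constructor; constructor
  intro a b
  have := hc.is_comm.comm ⟨N.subtype a.1, ⟨a.1, a.2, rfl⟩⟩ ⟨N.subtype b.1, ⟨b.1, b.2, rfl⟩⟩
  have h2 : (N.subtype (a.1 * b.1) : G) = N.subtype (b.1 * a.1) := by
    simpa using congrArg Subtype.val this
  exact Subtype.ext (Subtype.coe_injective h2)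

/-- Let `N ⊴ G` with `p ∤ |G : N|`. If every `p`-element of `N` has class size in `N`
coprime to `p`, then every `p`-element of `G` has class size in `G` coprime to `p`;
moreover the Sylow `p`-subgroups of `N` are abelian iff those of `G` are. -/
theorem clp_lift_from_normal {G : Type*} [Group G] [Finite G] (p : ℕ) [Fact p.Prime]
    (N : Subgroup G) [N.Normal] (hind : ¬ p ∣ N.index)
    (h : ∀ x : ↥N, (∃ n : ℕ, orderOf x = p ^ n) →
      ¬ p ∣ (Subgroup.centralizer {x} : Subgroup ↥N).index) :
    (∀ x : G, (∃ n : ℕ, orderOf x = p ^ n) → ¬ p ∣ (Subgroup.centralizer {x}).index) ∧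
    ((∀ P : Sylow p ↥N, IsMulCommutative ↥(P : Subgroup ↥N)) ↔
      (∀ P : Sylow p G, IsMulCommutative ↥(P : Subgroup G))) := by
  have hp := (Fact.out : p.Prime)
  -- every p-element lies in N
  have hmem : ∀ x : G, (∃ n : ℕ, orderOf x = p ^ n) → x ∈ N := by
    rintro x ⟨n, hn⟩
    have h1 : orderOf ((x : G ⧸ N)) ∣ p ^ n := by
      rw [← hn]; exact orderOf_map_dvd (QuotientGroup.mk' N) x
    have h2 : orderOf ((x : G ⧸ N)) ∣ N.index := orderOf_dvd_natCard _
    have hcop : Nat.Coprime (p ^ n) N.index :=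
      Nat.Coprime.pow_left _ ((Nat.Prime.coprime_iff_not_dvd hp).mpr hind)
    have : orderOf ((x : G ⧸ N)) = 1 := Nat.eq_one_of_dvd_coprimes hcop h1 h2
    rw [orderOf_eq_one_iff] at this
    exact (QuotientGroup.eq_one_iff x).mp this
  have part1 : ∀ x : G, (∃ n : ℕ, orderOf x = p ^ n) →
      ¬ p ∣ (Subgroup.centralizer {x}).index := by
    rintro x hx hdvd
    have hxN : x ∈ N := hmem x hx
    set x' : ↥N := ⟨x, hxN⟩ with hx'
    have hord : orderOf x' = orderOf x := (orderOf_injective N.subtype Subtype.coe_injective x').symm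
    have hkey : (Subgroup.centralizer {x'} : Subgroup ↥N)
        = (Subgroup.centralizer {x}).subgroupOf N := by
      ext y
      simp only [Subgroup.mem_centralizer_singleton_iff, Subgroup.mem_subgroupOf]
      constructor
      · intro hy
        have := congrArg Subtype.val hy
        simpa using this
      · intro hy
        exact Subtype.ext hy
    have hnd := h x' (by rwa [hord])
    rw [hkey] at hnd
    -- p ∤ relIndex, p ∤ index, but p ∣ centralizer index
    have hle : Subgroup.centralizer {x} ⊓ N ≤ Subgroup.centralizer {x} := inf_le_left
    have hdvd2 : (Subgroup.centralizer {x}).index ∣ (Subgroup.centralizer {x} ⊓ N).index :=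
      Subgroup.index_dvd_of_le inf_le_left
    have hrel : (Subgroup.centralizer {x} ⊓ N).relIndex N * N.index
        = (Subgroup.centralizer {x} ⊓ N).index :=
      Subgroup.relIndex_mul_index inf_le_right
    have hrel2 : (Subgroup.centralizer {x} ⊓ N).relIndex N
        = ((Subgroup.centralizer {x}).subgroupOf N).index := by
      rw [Subgroup.relIndex, Subgroup.inf_subgroupOf_right]
    have : p ∣ (Subgroup.centralizer {x} ⊓ N).index := hdvd.trans hdvd2
    rw [← hrel, hrel2] at this
    rcases hp.dvd_mul.mp this with h' | h'
    · exact hnd h'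
    · exact hind h'
  refine ⟨part1, ?_, ?_⟩
  · -- Sylow N comm → Sylow G comm
    intro hN Q
    have hQN : (Q : Subgroup G) ≤ N := by
      intro g hg
      obtain ⟨k, hk⟩ := Q.2 ⟨g, hg⟩
      have : orderOf (⟨g, hg⟩ : ↥(Q : Subgroup G)) ∣ p ^ k := orderOf_dvd_of_pow_eq_one hk
      obtain ⟨m, _, hm⟩ := (Nat.dvd_prime_pow hp).mp this
      have : orderOf g = p ^ m := by
        rw [← hm]
        exact orderOf_injective (Q : Subgroup G).subtype Subtype.coe_injective ⟨g, hg⟩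
      exact hmem g ⟨m, this⟩
    have hpg : IsPGroup p ((Q : Subgroup G).subgroupOf N) := Q.2.comap_subtype
    obtain ⟨P, hP⟩ := hpg.exists_le_sylow
    exact comm_of_subgroupOf hQN (comm_of_le' hP (hN P))
  · -- Sylow G comm → Sylow N comm
    intro hG P
    have hpg : IsPGroup p ((P : Subgroup ↥N).map N.subtype) :=
      P.2.map N.subtype
    obtain ⟨Q, hQ⟩ := hpg.exists_le_sylow
    exact comm_of_map (comm_of_le' hQ (hG Q))
end

section
/- Let G be a finite group, p a prime, and N a normal subgroup with p not dividing |N|. If every p-element of G/N has class size in G/N coprime to p, then every p-element of G has class size in G coprime to p; moreover G is cl_p if and only if G/N is cl_p. -/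
/-- A group `G` is `cl_p` if its Sylow `p`-subgroups are non-abelian and every `p`-element
of `G` has conjugacy class size coprime to `p`. -/
def IsClP (p : ℕ) (G : Type*) [Group G] : Prop :=
  (∀ P : Sylow p G, ¬ IsMulCommutative (P : Subgroup G)) ∧
  ∀ x : G, (∃ n : ℕ, orderOf x = p ^ n) → ¬ p ∣ (Subgroup.centralizer {x}).index

/-- An element lying both in a `p`-subgroup and in a subgroup of order coprime to `p`
is trivial. -/
lemma clp_aux_eq_one {G : Type*} [Group G] {p : ℕ} [hp : Fact p.Prime]
    {K N : Subgroup G} (hK : IsPGroup p K) (hN : ¬ p ∣ Nat.card N)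
    {y : G} (hyK : y ∈ K) (hyN : y ∈ N) : y = 1 := by
  obtain ⟨k, hk⟩ := hK ⟨y, hyK⟩
  have hk' : y ^ p ^ k = 1 := by
    simpa [Subtype.ext_iff] using hk
  have hdvd1 : orderOf y ∣ p ^ k := orderOf_dvd_of_pow_eq_one hk'
  have hdvd2 : orderOf y ∣ Nat.card N := N.orderOf_dvd_natCard hyN
  have hcop : Nat.Coprime (p ^ k) (Nat.card N) :=
    ((Nat.Prime.coprime_iff_not_dvd hp.out).mpr hN).pow_left _
  have : orderOf y ∣ Nat.gcd (p ^ k) (Nat.card N) := Nat.dvd_gcd hdvd1 hdvd2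
  rw [Nat.Coprime] at hcop
  rw [hcop, Nat.dvd_one, orderOf_eq_one_iff] at this
  exact this

/-- Let `N ⊴ G` with `p ∤ |N|`. If every `p`-element of `G/N` has class size coprime to
`p`, then every `p`-element of `G` does; moreover `G` is `cl_p` iff `G/N` is `cl_p`. -/
theorem clp_lift_from_quotient {G : Type*} [Group G] [Finite G] (p : ℕ) [Fact p.Prime]
    (N : Subgroup G) [N.Normal] (hN : ¬ p ∣ Nat.card N)
    (h : ∀ x : G ⧸ N, (∃ n : ℕ, orderOf x = p ^ n) →
      ¬ p ∣ (Subgroup.centralizer {x} : Subgroup (G ⧸ N)).index) :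
    (∀ x : G, (∃ n : ℕ, orderOf x = p ^ n) → ¬ p ∣ (Subgroup.centralizer {x}).index) ∧
    (IsClP p G ↔ IsClP p (G ⧸ N)) := by
  have hp : p.Prime := Fact.out
  set π := QuotientGroup.mk' N with hπ
  have hπs : Function.Surjective π := QuotientGroup.mk'_surjective N
  have key : ∀ x : G, (∃ n : ℕ, orderOf x = p ^ n) →
      ¬ p ∣ (Subgroup.centralizer {x}).index := by
    rintro x ⟨n, hn⟩
    have hxbar : ∃ m : ℕ, orderOf (π x) = p ^ m := by
      have hdvd : orderOf (π x) ∣ p ^ n := hn ▸ orderOf_map_dvd π x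
      obtain ⟨m, -, hm⟩ := (Nat.dvd_prime_pow hp).mp hdvd
      exact ⟨m, hm⟩
    have hC := h (π x) hxbar
    set H : Subgroup G := (Subgroup.centralizer {π x}).comap π with hH
    have hHindex : ¬ p ∣ H.index := by
      rwa [Subgroup.index_comap_of_surjective _ hπs]
    have hxH : x ∈ H := by
      simp [hH, Subgroup.mem_comap, Subgroup.mem_centralizer_singleton_iff]
    -- a Sylow subgroup of `H` containing `x`
    have hxg : IsPGroup p (Subgroup.zpowers (⟨x, hxH⟩ : H)) := by
      apply IsPGroup.of_card
      rw [Nat.card_zpowers, Subgroup.orderOf_mk, hn]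
    obtain ⟨Q, hQle⟩ := hxg.exists_le_sylow
    set Q' : Subgroup G := (Q : Subgroup H).map H.subtype with hQ'
    have hpQ' : IsPGroup p Q' := Q.2.map H.subtype
    have hxQ' : x ∈ Q' := ⟨⟨x, hxH⟩, hQle (Subgroup.mem_zpowers _), rfl⟩
    have hQ'le : Q' ≤ Subgroup.centralizer {x} := by
      intro q hq
      have hqH : q ∈ H := by
        obtain ⟨⟨q', hq'⟩, -, rfl⟩ := hq
        exact hq'
      have hcommN : q * x * q⁻¹ * x⁻¹ ∈ N := by
        have hc : π q * π x = π x * π q :=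
          Subgroup.mem_centralizer_singleton_iff.mp (Subgroup.mem_comap.mp hqH)
        have : π (q * x * q⁻¹ * x⁻¹) = 1 := by
          simp only [map_mul, map_inv]
          rw [hc]
          group
        rwa [← QuotientGroup.ker_mk' N, MonoidHom.mem_ker]
      have hmemQ' : q * x * q⁻¹ * x⁻¹ ∈ Q' :=
        mul_mem (mul_mem (mul_mem hq hxQ') (inv_mem hq)) (inv_mem hxQ')
      have h1 : q * x * q⁻¹ * x⁻¹ = 1 := clp_aux_eq_one hpQ' hN hmemQ' hcommN
      rw [Subgroup.mem_centralizer_singleton_iff]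
      have := mul_eq_one_iff_eq_inv.mp h1
      calc q * x = (q * x * q⁻¹ * x⁻¹) * (x * q) := by group
        _ = x * q := by rw [h1, one_mul]
    have hdvdQ' : (Subgroup.centralizer {x}).index ∣ Q'.index :=
      Subgroup.index_dvd_of_le hQ'le
    have hQ'index : ¬ p ∣ Q'.index := by
      rw [hQ', Subgroup.index_map_subtype]
      exact Nat.Prime.not_dvd_mul hp Q.not_dvd_index hHindex
    exact fun hd => hQ'index (hd.trans hdvdQ')
  refine ⟨key, ?_⟩
  constructor
  · rintro ⟨hsyl, -⟩
    refine ⟨?_, h⟩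
    intro Pbar hPbar
    obtain ⟨P, hP⟩ := Sylow.mapSurjective_surjective hπs p Pbar
    refine hsyl P ⟨⟨fun a b => ?_⟩⟩
    apply Subtype.ext
    have hcoe : (Pbar : Subgroup (G ⧸ N)) = (P : Subgroup G).map π := by
      rw [← hP]; rfl
    have haP : π (a : G) ∈ (Pbar : Subgroup (G ⧸ N)) := by
      rw [hcoe]; exact Subgroup.mem_map_of_mem π a.2
    have hbP : π (b : G) ∈ (Pbar : Subgroup (G ⧸ N)) := by
      rw [hcoe]; exact Subgroup.mem_map_of_mem π b.2
    have hc : π (a : G) * π (b : G) = π (b : G) * π (a : G) :=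
      Subgroup.mul_comm_of_mem_isMulCommutative _ haP hbP
    have hmemN : (a : G) * b * (a : G)⁻¹ * (b : G)⁻¹ ∈ N := by
      have : π ((a : G) * b * (a : G)⁻¹ * (b : G)⁻¹) = 1 := by
        simp only [map_mul, map_inv]
        rw [hc]
        group
      rwa [← QuotientGroup.ker_mk' N, MonoidHom.mem_ker]
    have hmemP : (a : G) * b * (a : G)⁻¹ * (b : G)⁻¹ ∈ (P : Subgroup G) :=
      mul_mem (mul_mem (mul_mem a.2 b.2) (inv_mem a.2)) (inv_mem b.2)
    have h1 : (a : G) * b * (a : G)⁻¹ * (b : G)⁻¹ = 1 :=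
      clp_aux_eq_one P.2 hN hmemP hmemN
    show (a : G) * b = (b : G) * a
    calc (a : G) * b = ((a : G) * b * (a : G)⁻¹ * (b : G)⁻¹) * ((b : G) * a) := by group
      _ = (b : G) * a := by rw [h1, one_mul]
  · rintro ⟨hsyl, -⟩
    refine ⟨?_, key⟩
    intro P hPcomm
    refine hsyl (P.mapSurjective hπs) ⟨⟨fun a b => ?_⟩⟩
    apply Subtype.ext
    have ha : (a : G ⧸ N) ∈ (P : Subgroup G).map π := a.2
    have hb : (b : G ⧸ N) ∈ (P : Subgroup G).map π := b.2
    obtain ⟨g, hg, hga⟩ := ha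
    obtain ⟨g', hg', hgb⟩ := hb
    show (a : G ⧸ N) * b = (b : G ⧸ N) * a
    rw [← hga, ← hgb, ← map_mul, ← map_mul,
      Subgroup.mul_comm_of_mem_isMulCommutative _ hg hg']
end

section
/- Let G be a finite group and p a prime such that the conjugacy class size of every p-element of G is coprime to p. Then O_p(G) is contained in the center of every Sylow p-subgroup of G; in particular O_p(G) ≤ Z(P) for any P ∈ Syl_p(G). -/
open Pointwise

/-- The `p`-core `O_p(G)`: the largest normal `p`-subgroup of `G` (the join of all
normal `p`-subgroups). -/
def pCore (p : ℕ) (G : Type*) [Group G] : Subgroup G :=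
  ⨆ (N : Subgroup G) (_ : N.Normal) (_ : IsPGroup p ↥N), N

lemma pCore_le_sylow {G : Type*} [Group G] [Finite G] {p : ℕ} [Fact p.Prime]
    (P : Sylow p G) : pCore p G ≤ P := by
  refine iSup_le fun N => iSup_le fun hN => iSup_le fun hpN => ?_
  obtain ⟨Q, hQ⟩ := hpN.exists_le_sylow
  obtain ⟨g, hg⟩ := MulAction.exists_smul_eq G Q P
  intro n hn
  rw [← hg]
  have : g⁻¹ * n * g ∈ N := hN.conj_mem' n hn g
  have h2 : g⁻¹ * n * g ∈ Q := hQ this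
  show n ∈ MulAut.conj g • Q.1
  rw [Subgroup.mem_pointwise_smul_iff_inv_smul_mem]
  simp only [MulAut.smul_def, MulAut.conj_inv_apply]; exact h2

lemma sylow_le_centralizer {G : Type*} [Group G] [Finite G] {p : ℕ} [Fact p.Prime]
    {C : Subgroup G} (hC : ¬ p ∣ C.index) : ∃ R : Sylow p G, (R : Subgroup G) ≤ C := by
  obtain ⟨S⟩ : Nonempty (Sylow p C) := inferInstance
  have hmap : IsPGroup p ((S : Subgroup C).map C.subtype) := S.2.map _
  obtain ⟨R, hR⟩ := hmap.exists_le_sylow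
  have hcardS : Nat.card ((S : Subgroup C).map C.subtype) = Nat.card (S : Subgroup C) :=
    (Nat.card_congr ((S : Subgroup C).equivMapOfInjective _ C.subtype_injective).toEquiv).symm
  have hSc : Nat.card (S : Subgroup C) = p ^ (Nat.card C).factorization p :=
    S.card_eq_multiplicity
  have hRc : Nat.card (R : Subgroup G) = p ^ (Nat.card G).factorization p :=
    R.card_eq_multiplicity
  have hfac : (Nat.card G).factorization p = (Nat.card C).factorization p := by
    have hmul : Nat.card C * C.index = Nat.card G := C.card_mul_index
    have hCpos : Nat.card C ≠ 0 := Nat.card_pos.ne'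
    have hipos : C.index ≠ 0 := by
      have := Subgroup.index_ne_zero_of_finite (H := C)
      exact this
    rw [← hmul, Nat.factorization_mul hCpos hipos]
    simp [Nat.factorization_eq_zero_of_not_dvd hC]
  have : (S : Subgroup C).map C.subtype = R := by
    refine Subgroup.eq_of_le_of_card_ge hR ?_
    rw [hcardS, hSc, hRc, hfac]
  exact ⟨R, this ▸ Subgroup.map_subtype_le _⟩

/-- If every `p`-element of the finite group `G` has class size coprime to `p`, then
`O_p(G)` is contained in the centre of every Sylow `p`-subgroup of `G`. -/
theorem pCore_le_center_sylow {G : Type*} [Group G] [Finite G] (p : ℕ) [Fact p.Prime]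
    (h : ∀ x : G, (∃ n : ℕ, orderOf x = p ^ n) → ¬ p ∣ (Subgroup.centralizer {x}).index)
    (P : Sylow p G) :
    ∀ x ∈ pCore p G, x ∈ (P : Subgroup G) ∧ ∀ y ∈ (P : Subgroup G), x * y = y * x := by
  intro x hx
  refine ⟨pCore_le_sylow P hx, fun y hy => ?_⟩
  have hord : ∃ n : ℕ, orderOf y = p ^ n := by
    obtain ⟨k, hk⟩ := P.2 ⟨y, hy⟩
    have : y ^ p ^ k = 1 := by
      have := congrArg (Subtype.val) hk
      simpa using this
    obtain ⟨n, -, hn⟩ := (Nat.dvd_prime_pow Fact.out).mp (orderOf_dvd_of_pow_eq_one this)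
    exact ⟨n, hn⟩
  obtain ⟨R, hR⟩ := sylow_le_centralizer (h y hord)
  have hxC : x ∈ Subgroup.centralizer {y} := hR (pCore_le_sylow R hx)
  have := Subgroup.mem_centralizer_iff.mp hxC y rfl
  exact this.symm
end

section
/- Let G be a finite group and p a prime. Suppose K ⊴ G with G/K of order p, and suppose there exists a p-element x ∈ G \ K whose centralizer contains a Sylow p-subgroup of G. If the Sylow p-subgroups of K are abelian, then the Sylow p-subgroups of G are abelian. -/
/-- Let `K ⊴ G` with `|G : K| = p`, and suppose some `p`-element `x ∉ K` has a Sylow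
`p`-subgroup of `G` inside its centralizer. If the Sylow `p`-subgroups of `K` are abelian,
then the Sylow `p`-subgroups of `G` are abelian. -/
theorem sylow_abelian_of_index_p {G : Type*} [Group G] [Finite G] (p : ℕ) [Fact p.Prime]
    (K : Subgroup G) [K.Normal] (hK : K.index = p)
    (x : G) (hxK : x ∉ K) (hx : ∃ n : ℕ, orderOf x = p ^ n)
    (hcent : ∃ P : Sylow p G, (P : Subgroup G) ≤ Subgroup.centralizer {x})
    (hab : ∀ Q : Sylow p ↥K, IsMulCommutative ↥(Q : Subgroup ↥K)) :
    ∀ P : Sylow p G, IsMulCommutative ↥(P : Subgroup G) := by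
  obtain ⟨P, hP⟩ := hcent
  -- x commutes with every element of P
  have hcomm : ∀ g ∈ (P : Subgroup G), Commute x g := by
    intro g hg
    exact (Subgroup.mem_centralizer_iff.mp (hP hg) x (Set.mem_singleton x))
  -- ⟨x⟩ is a p-group
  have hxpg : IsPGroup p (Subgroup.zpowers x) := by
    obtain ⟨n, hn⟩ := hx
    rw [IsPGroup.iff_card, Nat.card_zpowers, hn]
    exact ⟨n, rfl⟩
  -- ⟨x⟩ normalizes P
  have hconj : ∀ g ∈ (P : Subgroup G), x * g * x⁻¹ = g := by
    intro g hg
    calc x * g * x⁻¹ = g * x * x⁻¹ := by rw [(hcomm g hg).eq]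
    _ = g := by group
  have hconj' : ∀ g ∈ (P : Subgroup G), x⁻¹ * g * x = g := by
    intro g hg
    calc x⁻¹ * g * x = g * x⁻¹ * x := by rw [(hcomm g hg).inv_left.eq]
    _ = g := by group
  have hnorm : Subgroup.zpowers x ≤ Subgroup.normalizer (P : Subgroup G) := by
    rw [Subgroup.zpowers_le]
    rw [Subgroup.mem_normalizer_iff]
    intro g
    constructor
    · intro hg; rw [hconj g hg]; exact hg
    · intro hg
      have h2 := hconj' _ hg
      have h3 : x⁻¹ * (x * g * x⁻¹) * x = g := by group
      rw [h3] at h2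
      rw [h2]; exact hg
  -- hence x ∈ P
  have hxP : x ∈ (P : Subgroup G) := by
    have hpg : IsPGroup p ((P : Subgroup G) ⊔ Subgroup.zpowers x : Subgroup G) :=
      IsPGroup.to_sup_of_normal_left' P.2 hxpg hnorm
    have := P.3 hpg le_sup_left
    rw [← this]
    exact Subgroup.mem_sup_right (Subgroup.mem_zpowers x)
  -- P ∩ K is commutative
  have hPK : ∀ a b : G, a ∈ (P : Subgroup G) → a ∈ K → b ∈ (P : Subgroup G) → b ∈ K →
      Commute a b := by
    intro a b haP haK hbP hbK
    have hpg : IsPGroup p ((P : Subgroup G).subgroupOf K) := P.2.comap_subtype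
    obtain ⟨Q, hQ⟩ := hpg.exists_le_sylow
    have hQc := hab Q
    have h1 : (⟨a, haK⟩ : K) ∈ (Q : Subgroup K) := hQ (by simpa [Subgroup.mem_subgroupOf])
    have h2 : (⟨b, hbK⟩ : K) ∈ (Q : Subgroup K) := hQ (by simpa [Subgroup.mem_subgroupOf])
    have := hQc.is_comm.comm ⟨⟨a, haK⟩, h1⟩ ⟨⟨b, hbK⟩, h2⟩
    have := congrArg (fun y : (Q : Subgroup K) => (y : G)) this
    simpa [Commute, SemiconjBy] using this
  -- the image of x generates G / K
  have hquot : ∀ a : G, ∃ i : ℤ, a * (x ^ i)⁻¹ ∈ K := by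
    intro a
    set π := QuotientGroup.mk' K
    have hcard : Nat.card (G ⧸ K) = p := by rw [← hK]; exact (Subgroup.index_eq_card K).symm
    have hne : π x ≠ 1 := by
      simpa [π, QuotientGroup.eq_one_iff] using hxK
    have hord : orderOf (π x) = p := by
      have hdvd : orderOf (π x) ∣ p := hcard ▸ orderOf_dvd_natCard (π x)
      rcases (Nat.Prime.eq_one_or_self_of_dvd (Fact.out) _ hdvd) with h | h
      · exact absurd (orderOf_eq_one_iff.mp h) hne
      · exact h
    have htop : Subgroup.zpowers (π x) = ⊤ := by
      apply Subgroup.eq_top_of_card_eq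
      rw [Nat.card_zpowers, hord, hcard]
    have : π a ∈ Subgroup.zpowers (π x) := htop ▸ Subgroup.mem_top _
    obtain ⟨i, hi⟩ := this
    simp only at hi
    refine ⟨i, ?_⟩
    have h1 : π (a * (x ^ i)⁻¹) = 1 := by
      simp only [map_mul, map_inv, map_zpow]
      rw [hi]
      group
    exact (QuotientGroup.eq_one_iff _).mp h1
  -- P is commutative
  have hPcomm : IsMulCommutative ↥(P : Subgroup G) := by
    constructor
    constructor
    rintro ⟨a, ha⟩ ⟨b, hb⟩
    obtain ⟨i, hi⟩ := hquot a
    obtain ⟨j, hj⟩ := hquot b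
    have hxiP : x ^ i ∈ (P : Subgroup G) := Subgroup.zpow_mem _ hxP i
    have hxjP : x ^ j ∈ (P : Subgroup G) := Subgroup.zpow_mem _ hxP j
    have hk1P : a * (x ^ i)⁻¹ ∈ (P : Subgroup G) := Subgroup.mul_mem _ ha (Subgroup.inv_mem _ hxiP)
    have hk2P : b * (x ^ j)⁻¹ ∈ (P : Subgroup G) := Subgroup.mul_mem _ hb (Subgroup.inv_mem _ hxjP)
    have c12 : Commute (a * (x ^ i)⁻¹) (b * (x ^ j)⁻¹) := hPK _ _ hk1P hi hk2P hj
    have cx1 : Commute x (a * (x ^ i)⁻¹) := hcomm _ hk1P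
    have cx2 : Commute x (b * (x ^ j)⁻¹) := hcomm _ hk2P
    have cab : Commute a b := by
      have ha' : a = (a * (x ^ i)⁻¹) * x ^ i := by group
      have hb' : b = (b * (x ^ j)⁻¹) * x ^ j := by group
      rw [ha', hb']
      exact (c12.mul_right (cx1.zpow_left j).symm).mul_left
        ((cx2.zpow_left i).mul_right (Commute.zpow_zpow_self x i j))
    exact Subtype.ext cab
  -- transfer to all Sylow subgroups by conjugacy
  intro P'
  obtain ⟨g, hg⟩ := MulAction.exists_smul_eq G P P'
  have : (P' : Subgroup G) = (P : Subgroup G).map (MulAut.conj g).toMonoidHom := by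
    rw [← hg, Sylow.coe_subgroup_smul, Subgroup.pointwise_smul_def]
    rfl
  rw [this]
  have := hPcomm
  exact Subgroup.map_isMulCommutative _ _
end
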